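/- Let R be a right Hereditary ring. Then every injective right R-module is max-projective if and only if every simple injective right R-module is projective. -/
import Mathlib


universe u v

/-- A module `M` is *max-projective* if every homomorphism `M → R/I`, for `I` a
maximal right ideal of `R`, factors through the canonical projection `R → R/I`. -/
def MaxProjective (R : Type u) [Ring R] (M : Type v) [AddCommGroup M] [Module R M] : Prop :=
  ∀ I : Submodule R R, IsCoatom I → ∀ g : M →ₗ[R] R ⧸ I,
    ∃ h : M →ₗ[R] R, I.mkQ.comp h = g

/-- Over a right hereditary ring, every injective module is max-projective iff
every simple injective module is projective. -/
theorem hereditary_maxQF_iff_simple_injective_projective (R : Type u) [Ring R]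
    (hHer : ∀ I : Submodule R R, Module.Projective R I) :
    (∀ (E : Type u) [AddCommGroup E] [Module R E], Module.Injective R E →
        MaxProjective R E) ↔
      (∀ (S : Type u) [AddCommGroup S] [Module R S],
        IsSimpleModule R S → Module.Injective R S → Module.Projective R S) := by
  constructor
  · intro hmax S _ _ hS hInj
    obtain ⟨I, hImax, ⟨e⟩⟩ := isSimpleModule_iff_quot_maximal.mp hS
    have hCoatom : IsCoatom I := Ideal.isMaximal_def.mp hImax
    obtain ⟨k, hk⟩ := hmax S hInj I hCoatom e.toLinearMap
    have hkinj : Function.Injective k := by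
      intro x y hxy
      have : e x = e y := by
        have hx := LinearMap.congr_fun hk x
        have hy := LinearMap.congr_fun hk y
        simp only [LinearEquiv.coe_coe] at hx hy
        rw [← hx, ← hy]
        simp [hxy]
      exact e.injective this
    haveI := hHer (LinearMap.range k)
    exact Module.Projective.of_equiv (LinearEquiv.ofInjective k hkinj).symm
  · intro hsimp E _ _ hE I hI g
    by_cases hg : g = 0
    · exact ⟨0, by simp [hg]⟩
    haveI hsimple : IsSimpleModule R (R ⧸ I) := isSimpleModule_iff_isCoatom.mpr hI
    have hgs : Function.Surjective g := by
      rw [← LinearMap.range_eq_top]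
      rcases eq_bot_or_eq_top (LinearMap.range g) with h0 | ht
      · exact absurd (LinearMap.range_eq_bot.mp h0) hg
      · exact ht
    have baer : Module.Baer R (R ⧸ I) := by
      intro J f
      haveI := hHer J
      obtain ⟨f', hf'⟩ := Module.projective_lifting_property g f hgs
      obtain ⟨h', hh'⟩ := hE.out J.subtype (Submodule.injective_subtype J) f'
      refine ⟨g.comp h', fun x mem => ?_⟩
      have h1 : h' x = f' ⟨x, mem⟩ := hh' ⟨x, mem⟩
      have h2 : g (f' ⟨x, mem⟩) = f ⟨x, mem⟩ := LinearMap.congr_fun hf' ⟨x, mem⟩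
      simp [h1, h2]
    haveI := hsimp (R ⧸ I) hsimple baer.injective
    obtain ⟨s, hs⟩ := Module.projective_lifting_property I.mkQ
      (LinearMap.id : R ⧸ I →ₗ[R] R ⧸ I) (Submodule.mkQ_surjective I)
    refine ⟨s.comp g, ?_⟩
    rw [← LinearMap.comp_assoc, hs, LinearMap.id_comp]
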